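/- Let T be a tree and let uv be an edge of T. Let T_{uv}^{(2)} be the tree obtained from T by replacing the edge uv with a path of length 3 through two new vertices. Then diss(T_{uv}^{(2)}) ∈ {diss(T) + 1, diss(T) + 2}. -/

import Mathlib

/-- `S` is a dissociation set of `G`: the subgraph induced by `S` has maximum degree ≤ 1. -/
def IsDissocSet {V : Type} (G : SimpleGraph V) (S : Set V) : Prop :=
  ∀ v ∈ S, ({u ∈ S | G.Adj v u}).ncard ≤ 1

/-- The dissociation number of `G`: the maximum cardinality of a dissociation set. -/
noncomputable def dissNum {V : Type} [Fintype V] (G : SimpleGraph V) : ℕ :=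
  sSup {k | ∃ S : Set V, IsDissocSet G S ∧ S.ncard = k}

/-- The `k`-subdivision `T_{uv}^{(k)}` of the edge `uv` of `T`: the edge `uv` is replaced
by a path `u, w₀, w₁, …, w_{k-1}, v` of length `k+1` through `k` new vertices
`w₀, …, w_{k-1}` (the elements of `Fin k`); all other edges of `T` are kept. -/
def subdivide {V : Type} (T : SimpleGraph V) (u v : V) (k : ℕ) :
    SimpleGraph (V ⊕ Fin k) :=
  SimpleGraph.fromRel (fun x y =>
    (∃ a b : V, T.Adj a b ∧ ¬((a = u ∧ b = v) ∨ (a = v ∧ b = u)) ∧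
      x = Sum.inl a ∧ y = Sum.inl b) ∨
    (∃ p : Fin k, x = Sum.inl u ∧ (p : ℕ) = 0 ∧ y = Sum.inr p) ∨
    (∃ p q : Fin k, x = Sum.inr p ∧ y = Sum.inr q ∧ (p : ℕ) + 1 = q) ∨
    (∃ p : Fin k, x = Sum.inr p ∧ (p : ℕ) = k - 1 ∧ y = Sum.inl v))

/-- Pairwise characterization of dissociation sets over a finite vertex type. -/
lemma isDissoc_iff' {V : Type} [Fintype V] (G : SimpleGraph V) (S : Set V) :
    IsDissocSet G S ↔ ∀ x ∈ S, ∀ a ∈ S, ∀ b ∈ S, G.Adj x a → G.Adj x b → a = b := by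
  unfold IsDissocSet
  constructor
  · intro h x hx a ha b hb hxa hxb
    have := (Set.ncard_le_one (Set.toFinite _)).mp (h x hx)
    exact this a ⟨ha, hxa⟩ b ⟨hb, hxb⟩
  · intro h x hx
    exact (Set.ncard_le_one (Set.toFinite _)).mpr fun a ha b hb =>
      h x hx a ha.1 b hb.1 ha.2 hb.2

section adjlem
variable {V : Type} (T : SimpleGraph V) (u v : V)

lemma subdiv_adj_ll {a b : V} :
    (subdivide T u v 2).Adj (Sum.inl a) (Sum.inl b) ↔
      T.Adj a b ∧ ¬((a = u ∧ b = v) ∨ (a = v ∧ b = u)) := by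
  simp only [subdivide, SimpleGraph.fromRel_adj]
  constructor
  · rintro ⟨hne, (⟨a',b',h1,h2,h3,h4⟩|⟨p,h1,h2,h3⟩|⟨p,q,h1,h2,h3⟩|⟨p,h1,h2,h3⟩)|
      (⟨a',b',h1,h2,h3,h4⟩|⟨p,h1,h2,h3⟩|⟨p,q,h1,h2,h3⟩|⟨p,h1,h2,h3⟩)⟩ <;>
      simp_all <;>
      first
        | tauto
        | exact ⟨h1.symm, by tauto⟩
  · rintro ⟨h1, h2⟩
    exact ⟨by simp [h1.ne], Or.inl (Or.inl ⟨a, b, h1, h2, rfl, rfl⟩)⟩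

lemma subdiv_adj_lr {a : V} {p : Fin 2} :
    (subdivide T u v 2).Adj (Sum.inl a) (Sum.inr p) ↔
      (a = u ∧ p = 0) ∨ (a = v ∧ p = 1) := by
  simp only [subdivide, SimpleGraph.fromRel_adj]
  constructor
  · rintro ⟨hne, (⟨a',b',h1,h2,h3,h4⟩|⟨q,h1,h2,h3⟩|⟨q,r,h1,h2,h3⟩|⟨q,h1,h2,h3⟩)|
      (⟨a',b',h1,h2,h3,h4⟩|⟨q,h1,h2,h3⟩|⟨q,r,h1,h2,h3⟩|⟨q,h1,h2,h3⟩)⟩ <;>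
      simp_all <;> right <;> exact Fin.ext (by omega)
  · rintro (⟨rfl, rfl⟩ | ⟨rfl, rfl⟩)
    · exact ⟨by simp, Or.inl (Or.inr (Or.inl ⟨0, rfl, rfl, rfl⟩))⟩
    · exact ⟨by simp, Or.inr (Or.inr (Or.inr (Or.inr ⟨1, rfl, rfl, rfl⟩)))⟩

lemma subdiv_adj_rr {p q : Fin 2} :
    (subdivide T u v 2).Adj (Sum.inr p) (Sum.inr q) ↔
      (p = 0 ∧ q = 1) ∨ (p = 1 ∧ q = 0) := by
  simp only [subdivide, SimpleGraph.fromRel_adj]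
  constructor
  · rintro ⟨hne, (⟨a',b',h1,h2,h3,h4⟩|⟨r,h1,h2,h3⟩|⟨r,s,h1,h2,h3⟩|⟨r,h1,h2,h3⟩)|
      (⟨a',b',h1,h2,h3,h4⟩|⟨r,h1,h2,h3⟩|⟨r,s,h1,h2,h3⟩|⟨r,h1,h2,h3⟩)⟩ <;>
      simp_all <;> [left; right] <;> constructor <;> exact Fin.ext (by omega)
  · rintro (⟨rfl, rfl⟩ | ⟨rfl, rfl⟩)
    · exact ⟨by simp [Fin.ext_iff], Or.inl (Or.inr (Or.inr (Or.inl ⟨0, 1, rfl, rfl, rfl⟩)))⟩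
    · exact ⟨by simp [Fin.ext_iff], Or.inr (Or.inr (Or.inr (Or.inl ⟨0, 1, rfl, rfl, rfl⟩)))⟩

end adjlem

section dissnum
variable {V : Type} [Fintype V] (G : SimpleGraph V)

lemma diss_bddAbove :
    BddAbove {k | ∃ S : Set V, IsDissocSet G S ∧ S.ncard = k} := by
  refine ⟨Fintype.card V, ?_⟩
  rintro k ⟨S, -, rfl⟩
  calc S.ncard ≤ (Set.univ : Set V).ncard :=
        Set.ncard_le_ncard (Set.subset_univ S) (Set.toFinite _)
    _ = Fintype.card V := by simp [Set.ncard_univ]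

lemma diss_nonempty :
    ({k | ∃ S : Set V, IsDissocSet G S ∧ S.ncard = k}).Nonempty := by
  refine ⟨0, ∅, ?_, by simp⟩
  intro x hx
  simp at hx

lemma le_dissNum {S : Set V} (h : IsDissocSet G S) : S.ncard ≤ dissNum G :=
  le_csSup (diss_bddAbove G) ⟨S, h, rfl⟩

lemma exists_max_diss : ∃ S : Set V, IsDissocSet G S ∧ S.ncard = dissNum G :=
  Nat.sSup_mem (diss_nonempty G) (diss_bddAbove G)

lemma dissNum_le {n : ℕ} (h : ∀ S : Set V, IsDissocSet G S → S.ncard ≤ n) :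
    dissNum G ≤ n := by
  apply csSup_le (diss_nonempty G)
  rintro k ⟨S, hS, rfl⟩
  exact h S hS

end dissnum

section main
variable {V : Type} [Fintype V] (T : SimpleGraph V) (u v : V)

lemma dissNum_subdiv_lower (huv : T.Adj u v) :
    dissNum T + 1 ≤ dissNum (subdivide T u v 2) := by
  classical
  obtain ⟨S, hS, hcard⟩ := exists_max_diss T
  have hP := (isDissoc_iff' T S).mp hS
  set G := subdivide T u v 2 with hG
  by_cases hv : v ∈ S
  · -- add the vertex w₀ = inr 0
    set S' : Set (V ⊕ Fin 2) := insert (Sum.inr 0) (Sum.inl '' S) with hS'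
    have hr1 : (Sum.inr 1 : V ⊕ Fin 2) ∉ S' := by
      simp [hS', Fin.ext_iff]
    have nbr : ∀ x ∈ S', ∀ c ∈ S', G.Adj x c →
        (∃ y z : V, x = Sum.inl y ∧ c = Sum.inl z ∧ y ∈ S ∧ z ∈ S ∧ T.Adj y z ∧
          ¬((y = u ∧ z = v) ∨ (y = v ∧ z = u))) ∨
        (x = Sum.inl u ∧ c = Sum.inr 0 ∧ u ∈ S) ∨
        (x = Sum.inr 0 ∧ c = Sum.inl u ∧ u ∈ S) := by
      rintro x hx c hc hadj
      rcases hx with rfl | ⟨y, hy, rfl⟩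
      · rcases hc with rfl | ⟨z, hz, rfl⟩
        · exact absurd hadj (G.irrefl)
        · have := hadj.symm
          rw [hG, subdiv_adj_lr] at this
          rcases this with ⟨rfl, -⟩ | ⟨rfl, h01⟩
          · exact Or.inr (Or.inr ⟨rfl, rfl, hz⟩)
          · exact absurd h01 (by simp [Fin.ext_iff])
      · rcases hc with rfl | ⟨z, hz, rfl⟩
        · rw [hG, subdiv_adj_lr] at hadj
          rcases hadj with ⟨rfl, -⟩ | ⟨rfl, h01⟩
          · exact Or.inr (Or.inl ⟨rfl, rfl, hy⟩)
          · exact absurd h01 (by simp [Fin.ext_iff])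
        · rw [hG, subdiv_adj_ll] at hadj
          exact Or.inl ⟨y, z, rfl, rfl, hy, hz, hadj.1, hadj.2⟩
    have hdiss : IsDissocSet G S' := by
      rw [isDissoc_iff']
      intro x hx a ha b hb hxa hxb
      have hA := nbr x hx a ha hxa
      have hB := nbr x hx b hb hxb
      have key : ∀ c : V ⊕ Fin 2, x = Sum.inl u → u ∈ S →
          (∃ y z : V, x = Sum.inl y ∧ c = Sum.inl z ∧ y ∈ S ∧ z ∈ S ∧ T.Adj y z ∧
            ¬((y = u ∧ z = v) ∨ (y = v ∧ z = u))) → False := by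
        rintro c rfl hu ⟨y, z, hy1, rfl, hyS, hzS, hadj, hne⟩
        have hyu : u = y := by simpa using hy1
        subst hyu
        have := hP u hyS z hzS v hv hadj huv
        tauto
      rcases hA with ⟨y, z, hxy, rfl, hyS, hzS, hyz, hne⟩ | ⟨hxu, rfl, hu⟩ | ⟨hx0, rfl, hu⟩
      · rcases hB with ⟨y', z', hxy', rfl, hyS', hzS', hyz', hne'⟩ | ⟨hxu, rfl, hu⟩ | ⟨hx0, rfl, hu⟩
        · have : y = y' := by rw [hxy] at hxy'; exact Sum.inl.inj hxy'
          subst this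
          exact congrArg Sum.inl (hP y hyS z hzS z' hzS' hyz hyz')
        · exact absurd ⟨y, z, hxy, rfl, hyS, hzS, hyz, hne⟩ (fun h => key _ hxu hu h)
        · rw [hx0] at hxy; exact absurd hxy (by simp)
      · rcases hB with ⟨y', z', hxy', rfl, hyS', hzS', hyz', hne'⟩ | ⟨-, rfl, -⟩ | ⟨hx0, rfl, -⟩
        · exact absurd ⟨y', z', hxy', rfl, hyS', hzS', hyz', hne'⟩ (fun h => key _ hxu hu h)
        · rfl
        · rw [hxu] at hx0; exact absurd hx0 (by simp)
      · rcases hB with ⟨y', z', hxy', rfl, hyS', hzS', hyz', hne'⟩ | ⟨hxu, rfl, -⟩ | ⟨-, rfl, -⟩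
        · rw [hx0] at hxy'; exact absurd hxy' (by simp)
        · rw [hx0] at hxu; exact absurd hxu (by simp)
        · rfl
    have hcard' : S'.ncard = dissNum T + 1 := by
      rw [hS', Set.ncard_insert_of_notMem (by simp) (Set.toFinite _),
        Set.ncard_image_of_injective _ Sum.inl_injective, hcard]
    calc dissNum T + 1 = S'.ncard := hcard'.symm
      _ ≤ dissNum G := le_dissNum G hdiss
  · -- add the vertex w₁ = inr 1
    set S' : Set (V ⊕ Fin 2) := insert (Sum.inr 1) (Sum.inl '' S) with hS'
    have nbr : ∀ x ∈ S', ∀ c ∈ S', G.Adj x c →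
        (∃ y z : V, x = Sum.inl y ∧ c = Sum.inl z ∧ y ∈ S ∧ z ∈ S ∧ T.Adj y z ∧
          ¬((y = u ∧ z = v) ∨ (y = v ∧ z = u))) := by
      rintro x hx c hc hadj
      rcases hx with rfl | ⟨y, hy, rfl⟩
      · rcases hc with rfl | ⟨z, hz, rfl⟩
        · exact absurd hadj (G.irrefl)
        · have := hadj.symm
          rw [hG, subdiv_adj_lr] at this
          rcases this with ⟨rfl, h10⟩ | ⟨rfl, -⟩
          · exact absurd h10 (by simp [Fin.ext_iff])
          · exact absurd hz hv
      · rcases hc with rfl | ⟨z, hz, rfl⟩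
        · rw [hG, subdiv_adj_lr] at hadj
          rcases hadj with ⟨rfl, h10⟩ | ⟨rfl, -⟩
          · exact absurd h10 (by simp [Fin.ext_iff])
          · exact absurd hy hv
        · rw [hG, subdiv_adj_ll] at hadj
          exact ⟨y, z, rfl, rfl, hy, hz, hadj.1, hadj.2⟩
    have hdiss : IsDissocSet G S' := by
      rw [isDissoc_iff']
      intro x hx a ha b hb hxa hxb
      obtain ⟨y, z, hxy, rfl, hyS, hzS, hyz, -⟩ := nbr x hx a ha hxa
      obtain ⟨y', z', hxy', rfl, hyS', hzS', hyz', -⟩ := nbr x hx b hb hxb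
      have : y = y' := by rw [hxy] at hxy'; exact Sum.inl.inj hxy'
      subst this
      exact congrArg Sum.inl (hP y hyS z hzS z' hzS' hyz hyz')
    have hcard' : S'.ncard = dissNum T + 1 := by
      rw [hS', Set.ncard_insert_of_notMem (by simp) (Set.toFinite _),
        Set.ncard_image_of_injective _ Sum.inl_injective, hcard]
    calc dissNum T + 1 = S'.ncard := hcard'.symm
      _ ≤ dissNum G := le_dissNum G hdiss

lemma dissNum_subdiv_upper (huv : T.Adj u v) :
    dissNum (subdivide T u v 2) ≤ dissNum T + 2 := by
  classical
  set G := subdivide T u v 2 with hG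
  apply dissNum_le
  intro S' hS'
  have hP' := (isDissoc_iff' G S').mp hS'
  set S : Set V := Sum.inl ⁻¹' S' with hSdef
  by_cases huvS : u ∈ S ∧ v ∈ S
  · obtain ⟨hu, hvS⟩ := huvS
    -- S \ {u} is a dissociation set of T
    have hdiss : IsDissocSet T (S \ {u}) := by
      rw [isDissoc_iff']
      intro x hx a ha b hb hxa hxb
      have hadj : ∀ c ∈ S \ {u}, T.Adj x c → G.Adj (Sum.inl x) (Sum.inl c) := by
        intro c hc h
        rw [hG, subdiv_adj_ll]
        refine ⟨h, ?_⟩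
        rintro (⟨rfl, rfl⟩ | ⟨rfl, rfl⟩)
        · exact hx.2 rfl
        · exact hc.2 rfl
      exact Sum.inl.inj (hP' (Sum.inl x) hx.1 (Sum.inl a) ha.1 (Sum.inl b) hb.1
        (hadj a ha hxa) (hadj b hb hxb))
    -- not both w₀ and w₁ are in S'
    have hnotboth : ¬((Sum.inr 0 : V ⊕ Fin 2) ∈ S' ∧ (Sum.inr 1 : V ⊕ Fin 2) ∈ S') := by
      rintro ⟨h0, h1⟩
      have a1 : G.Adj (Sum.inr 0) (Sum.inl u) := by
        apply SimpleGraph.Adj.symm; rw [hG, subdiv_adj_lr]; exact Or.inl ⟨rfl, rfl⟩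
      have a2 : G.Adj (Sum.inr (0 : Fin 2)) (Sum.inr 1) := by
        rw [hG, subdiv_adj_rr]; exact Or.inl ⟨rfl, rfl⟩
      have := hP' (Sum.inr 0) h0 (Sum.inl u) hu (Sum.inr 1) h1 a1 a2
      simp at this
    -- find a single j with S' ⊆ insert (inr j) (inl '' S)
    obtain ⟨j, hj⟩ : ∃ j : Fin 2, S' ⊆ insert (Sum.inr j) (Sum.inl '' S) := by
      by_cases h0 : (Sum.inr 0 : V ⊕ Fin 2) ∈ S'
      · refine ⟨0, ?_⟩
        rintro (a | p) hx
        · exact Or.inr ⟨a, hx, rfl⟩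
        · rcases p with ⟨pv, hp⟩
          interval_cases pv
          · exact Or.inl rfl
          · exact absurd ⟨h0, hx⟩ hnotboth
      · refine ⟨1, ?_⟩
        rintro (a | p) hx
        · exact Or.inr ⟨a, hx, rfl⟩
        · rcases p with ⟨pv, hp⟩
          interval_cases pv
          · exact absurd hx h0
          · exact Or.inl rfl
    have himg : (Sum.inl '' S : Set (V ⊕ Fin 2)) = insert (Sum.inl u) (Sum.inl '' (S \ {u})) := by
      rw [← Set.image_insert_eq, Set.insert_diff_singleton, Set.insert_eq_of_mem hu]
    have hcard : S'.ncard ≤ (S \ {u}).ncard + 2 := by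
      calc S'.ncard ≤ (insert (Sum.inr j) (insert (Sum.inl u)
            (Sum.inl '' (S \ {u})))).ncard := by
            apply Set.ncard_le_ncard _ (Set.toFinite _)
            rw [← himg]; exact hj
        _ ≤ (insert (Sum.inl u) (Sum.inl '' (S \ {u}))).ncard + 1 :=
            Set.ncard_insert_le _ _
        _ ≤ (Sum.inl '' (S \ {u})).ncard + 1 + 1 := by
            have := Set.ncard_insert_le ((Sum.inl u : V ⊕ Fin 2)) (Sum.inl '' (S \ {u}))
            omega
        _ = (S \ {u}).ncard + 2 := by
            rw [Set.ncard_image_of_injective (S \ {u})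
              (Sum.inl_injective : Function.Injective (Sum.inl : V → V ⊕ Fin 2))]
      
    calc S'.ncard ≤ (S \ {u}).ncard + 2 := hcard
      _ ≤ dissNum T + 2 := by
          have := le_dissNum T hdiss; omega
  · -- S itself is a dissociation set of T
    have hdiss : IsDissocSet T S := by
      rw [isDissoc_iff']
      intro x hx a ha b hb hxa hxb
      have hadj : ∀ c ∈ S, T.Adj x c → G.Adj (Sum.inl x) (Sum.inl c) := by
        intro c hc h
        rw [hG, subdiv_adj_ll]
        refine ⟨h, ?_⟩
        rintro (⟨rfl, rfl⟩ | ⟨rfl, rfl⟩)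
        · exact huvS ⟨hx, hc⟩
        · exact huvS ⟨hc, hx⟩
      exact Sum.inl.inj (hP' (Sum.inl x) hx (Sum.inl a) ha (Sum.inl b) hb
        (hadj a ha hxa) (hadj b hb hxb))
    have hsub : S' ⊆ insert (Sum.inr 0) (insert (Sum.inr 1) (Sum.inl '' S)) := by
      rintro (a | p) hx
      · exact Or.inr (Or.inr ⟨a, hx, rfl⟩)
      · rcases p with ⟨pv, hp⟩
        interval_cases pv
        · exact Or.inl rfl
        · exact Or.inr (Or.inl rfl)
    have hcard : S'.ncard ≤ S.ncard + 2 := by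
      calc S'.ncard ≤ (insert (Sum.inr 0) (insert (Sum.inr 1) (Sum.inl '' S))).ncard :=
            Set.ncard_le_ncard hsub (Set.toFinite _)
        _ ≤ (insert (Sum.inr 1) (Sum.inl '' S)).ncard + 1 := Set.ncard_insert_le _ _
        _ ≤ (Sum.inl '' S).ncard + 1 + 1 := by
            have := Set.ncard_insert_le (Sum.inr 1 : V ⊕ Fin 2) (Sum.inl '' S)
            omega
        _ = S.ncard + 2 := by rw [Set.ncard_image_of_injective _ Sum.inl_injective]
    calc S'.ncard ≤ S.ncard + 2 := hcard
      _ ≤ dissNum T + 2 := by have := le_dissNum T hdiss; omega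

end main

/-- If `uv` is an edge of a tree `T` and `T_{uv}^{(2)}` is obtained from `T` by replacing
the edge `uv` with a path of length 3 through two new vertices, then
`diss(T_{uv}^{(2)}) ∈ {diss(T) + 1, diss(T) + 2}`. -/
theorem dissNum_subdivide_two
    {V : Type} [Fintype V] (T : SimpleGraph V) (hT : T.IsTree)
    (u v : V) (huv : T.Adj u v) :
    dissNum (subdivide T u v 2) = dissNum T + 1 ∨
    dissNum (subdivide T u v 2) = dissNum T + 2 := by
  have h1 := dissNum_subdiv_lower T u v huv
  have h2 := dissNum_subdiv_upper T u v huv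
  omega
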